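/- Let G be a connected graph of diameter at least n and let v be a vertex of G. Then for every m ≤ n/2, the ball B(v,n) contains at least (n − 2m)/(4m + 2) pairwise disjoint balls of radius m. -/
import Mathlib


/-- The graph-distance ball of radius `r` around `x`. -/
def graphBall {V : Type*} (G : SimpleGraph V) (x : V) (r : ℕ) : Set V :=
  {v | G.Reachable x v ∧ G.dist x v ≤ r}

lemma dist_getVert_add_le {V : Type*} {G : SimpleGraph V} (hconn : G.Connected) {u v : V}
    (p : G.Walk u v) (i k : ℕ) :
    G.dist (p.getVert i) (p.getVert (i + k)) ≤ k := by
  induction k with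
  | zero => simp
  | succ k ih =>
    by_cases h : i + k < p.length
    · have hadj := p.adj_getVert_succ h
      have h1 : G.dist (p.getVert (i + k)) (p.getVert (i + k + 1)) = 1 :=
        SimpleGraph.dist_eq_one_iff_adj.mpr hadj
      have h2 := hconn.dist_triangle (u := p.getVert i) (v := p.getVert (i + k))
        (w := p.getVert (i + k + 1))
      have : i + (k + 1) = i + k + 1 := by omega
      rw [this]
      omega
    · have h1 : p.getVert (i + (k + 1)) = v := p.getVert_of_length_le (by omega)
      have h2 : p.getVert (i + k) = v := p.getVert_of_length_le (by omega)
      rw [h2] at ih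
      rw [h1]
      omega

lemma dist_getVert_le {V : Type*} {G : SimpleGraph V} (hconn : G.Connected) {u v : V}
    (p : G.Walk u v) {i j : ℕ} (hij : i ≤ j) :
    G.dist (p.getVert i) (p.getVert j) ≤ j - i := by
  have := dist_getVert_add_le hconn p i (j - i)
  rwa [Nat.add_sub_cancel' hij] at this

lemma le_dist_getVert {V : Type*} {G : SimpleGraph V} (hconn : G.Connected) {u v : V}
    (p : G.Walk u v) (hgeo : p.length = G.dist u v) {i j : ℕ} (hij : i ≤ j)
    (hj : j ≤ p.length) :
    j - i ≤ G.dist (p.getVert i) (p.getVert j) := by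
  have h1 : G.dist u (p.getVert i) ≤ i := by
    have := dist_getVert_add_le hconn p 0 i
    simpa [p.getVert_zero] using this
  have h2 : G.dist (p.getVert j) v ≤ p.length - j := by
    have := dist_getVert_add_le hconn p j (p.length - j)
    rwa [Nat.add_sub_cancel' hj, p.getVert_length] at this
  have h3 := hconn.dist_triangle (u := u) (v := p.getVert i) (w := p.getVert j)
  have h4 := hconn.dist_triangle (u := u) (v := p.getVert j) (w := v)
  omega

/-- If `G` is a connected graph of diameter at least `n` and `m ≤ n/2`, then `B(v,n)`
contains at least `(n − 2m)/(4m + 2)` pairwise disjoint balls of radius `m`. -/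
theorem ball_contains_many_disjoint_balls
    {V : Type*} (G : SimpleGraph V) (hconn : G.Connected)
    (n : ℕ) (hdiam : ∃ x y : V, n ≤ G.dist x y)
    (v : V) (m : ℕ) (hm : 2 * m ≤ n) :
    ∃ Y : Finset V, ((n : ℝ) - 2 * m) / (4 * m + 2) ≤ (Y.card : ℝ) ∧
      (∀ y ∈ Y, graphBall G y m ⊆ graphBall G v n) ∧
      (Y : Set V).Pairwise fun a b => Disjoint (graphBall G a m) (graphBall G b m) := by
  obtain ⟨x, y, hxy⟩ := hdiam
  set c : ℕ := (n + 1) / 2 with hc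
  -- find a vertex at distance at least c from v
  obtain ⟨w, hw⟩ : ∃ w : V, c ≤ G.dist v w := by
    have htri := hconn.dist_triangle (u := x) (v := v) (w := y)
    rcases le_or_gt c (G.dist v x) with h | h
    · exact ⟨x, h⟩
    · refine ⟨y, ?_⟩
      have hcomm : G.dist x v = G.dist v x := SimpleGraph.dist_comm
      omega
  obtain ⟨p, hp⟩ := (hconn v w).exists_walk_length_eq_dist
  have hcl : c ≤ p.length := by omega
  have hmc : m ≤ c := by omega
  set q : ℕ := (c - m) / (2 * m + 1) with hq
  set k : ℕ := q + 1 with hk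
  -- positions of the centers
  have hpos : ∀ i < k, m + i * (2 * m + 1) ≤ c := by
    intro i hi
    have hi' : i ≤ q := by omega
    have : i * (2 * m + 1) ≤ c - m := by
      calc i * (2 * m + 1) ≤ q * (2 * m + 1) := by
            exact Nat.mul_le_mul_right _ hi'
        _ ≤ c - m := Nat.div_mul_le_self _ _
    omega
  set f : ℕ → V := fun i => p.getVert (m + i * (2 * m + 1)) with hf
  -- distance between distinct centers is at least 2m+1
  have hfar : ∀ i < k, ∀ j < k, i < j → 2 * m + 1 ≤ G.dist (f i) (f j) := by
    intro i hi j hj hij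
    simp only [hf]
    have h1 : m + i * (2 * m + 1) ≤ m + j * (2 * m + 1) := by
      have := Nat.mul_le_mul_right (2 * m + 1) (Nat.le_of_lt hij)
      omega
    have h2 : m + j * (2 * m + 1) ≤ p.length := le_trans (hpos j hj) hcl
    have h3 := le_dist_getVert hconn p hp h1 h2
    have h4 : (m + j * (2 * m + 1)) - (m + i * (2 * m + 1)) = (j - i) * (2 * m + 1) := by
      rw [Nat.sub_mul]; omega
    have h5 : 2 * m + 1 ≤ (j - i) * (2 * m + 1) := by
      have : 1 ≤ j - i := by omega
      calc 2 * m + 1 = 1 * (2 * m + 1) := by ring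
        _ ≤ (j - i) * (2 * m + 1) := Nat.mul_le_mul_right _ this
    rw [h4] at h3
    exact le_trans h5 h3
  have hfar' : ∀ i < k, ∀ j < k, i ≠ j → 2 * m + 1 ≤ G.dist (f i) (f j) := by
    intro i hi j hj hij
    rcases Nat.lt_or_ge i j with h | h
    · exact hfar i hi j hj h
    · have := hfar j hj i hi (by omega)
      rwa [G.dist_comm] at this
  classical
  refine ⟨(Finset.range k).image f, ?_, ?_, ?_⟩
  · -- cardinality bound
    have hcard : ((Finset.range k).image f).card = k := by
      rw [Finset.card_image_of_injOn, Finset.card_range]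
      intro i hi j hj hfij
      by_contra hne
      have := hfar' i (Finset.mem_range.mp hi) j (Finset.mem_range.mp hj) hne
      rw [hfij, SimpleGraph.dist_self] at this
      omega
    rw [hcard]
    -- nat facts
    have h1 : c - m < k * (2 * m + 1) :=
      (Nat.div_lt_iff_lt_mul (by omega)).mp (by rw [← hq, hk]; omega)
    have h2 : n ≤ 2 * c := by omega
    have h3 : (n : ℝ) - 2 * m ≤ (k : ℝ) * (4 * m + 2) := by
      have hcm : ((c - m : ℕ) : ℝ) = (c : ℝ) - m := by
        push_cast [Nat.cast_sub hmc]; ring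
      have h1' : ((c - m : ℕ) : ℝ) ≤ (k : ℝ) * (2 * m + 1) := by
        exact_mod_cast Nat.le_of_lt h1
      have h2' : (n : ℝ) ≤ 2 * c := by exact_mod_cast h2
      rw [hcm] at h1'
      nlinarith
    rw [div_le_iff₀ (by positivity)]
    linarith
  · -- containment
    intro a ha u hu
    simp only [Finset.mem_image, Finset.mem_range] at ha
    obtain ⟨i, hi, rfl⟩ := ha
    obtain ⟨hr, hd⟩ := hu
    refine ⟨hconn.preconnected v u, ?_⟩
    have h1 : G.dist v (f i) ≤ m + i * (2 * m + 1) := by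
      have := dist_getVert_add_le hconn p 0 (m + i * (2 * m + 1))
      simpa [p.getVert_zero, hf] using this
    have h2 := hconn.dist_triangle (u := v) (v := f i) (w := u)
    have h3 := hpos i hi
    omega
  · -- pairwise disjoint
    intro a ha b hb hab
    simp only [Finset.coe_image, Finset.coe_range, Set.mem_image, Set.mem_Iio] at ha hb
    obtain ⟨i, hi, rfl⟩ := ha
    obtain ⟨j, hj, rfl⟩ := hb
    have hij : i ≠ j := by rintro rfl; exact hab rfl
    rw [Set.disjoint_left]
    rintro u ⟨hra, hda⟩ ⟨hrb, hdb⟩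
    have h1 := hfar' i hi j hj hij
    have h2 := hconn.dist_triangle (u := f i) (v := u) (w := f j)
    have h3 : G.dist u (f j) ≤ m := by rwa [G.dist_comm]
    omega
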